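/- Schur's Pfaffian identity: for real numbers x₁,...,x_{2n} in (-1,1), the Pfaffian of the 2n×2n skew-symmetric matrix with (i,j)-entry (xᵢ-xⱼ)/(1-xᵢxⱼ) equals ∏_{1≤i<j≤2n} (xᵢ-xⱼ)/(1-xᵢxⱼ). -/

import Mathlib

open Finset
set_option maxHeartbeats 1000000

/-- The index `2*i + b` in `Fin (2*n)`, for `i : Fin n`, `b : Fin 2`. -/
def pairIdx {n : ℕ} (i : Fin n) (b : Fin 2) : Fin (2 * n) :=
  ⟨2 * i.1 + b.1, by have hi := i.2; have hb := b.2; omega⟩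

/-- The Pfaffian of a `2n × 2n` matrix: the signed sum over perfect matchings,
realized as the sum over permutations η with η(2i-1) < η(2i) and
η(1) < η(3) < ⋯ < η(2n-1). -/
def pfaffian {R : Type*} [CommRing R] {n : ℕ}
    (B : Matrix (Fin (2 * n)) (Fin (2 * n)) R) : R :=
  ∑ η : Equiv.Perm (Fin (2 * n)),
    if (∀ i : Fin n, η (pairIdx i 0) < η (pairIdx i 1)) ∧
        (∀ i j : Fin n, i < j → η (pairIdx i 0) < η (pairIdx j 0)) then
      ((Equiv.Perm.sign η : ℤ) : R) * ∏ i : Fin n, B (η (pairIdx i 0)) (η (pairIdx i 1))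
    else 0

namespace SchurPf
open Equiv

variable {m : ℕ}

/-- Admissibility predicate. -/
def Adm {n : ℕ} (η : Equiv.Perm (Fin (2 * n))) : Prop :=
  (∀ i : Fin n, η (pairIdx i 0) < η (pairIdx i 1)) ∧
    (∀ i j : Fin n, i < j → η (pairIdx i 0) < η (pairIdx j 0))

instance {n : ℕ} : DecidablePred (Adm (n := n)) := fun _ => by unfold Adm; infer_instance

lemma pfaffian_eq_sum_filter {R : Type*} [CommRing R] {n : ℕ}
    (B : Matrix (Fin (2 * n)) (Fin (2 * n)) R) :
    pfaffian B = ∑ η ∈ univ.filter (Adm (n := n)),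
      ((Equiv.Perm.sign η : ℤ) : R) * ∏ i : Fin n, B (η (pairIdx i 0)) (η (pairIdx i 1)) := by
  rw [Finset.sum_filter]
  unfold pfaffian Adm
  congr 1

def padE (m : ℕ) : Fin 2 ⊕ Fin (2 * m) ≃ Fin (2 * (m + 1)) :=
  finSumFinEquiv.trans (finCongr (by omega))

def emb2 (t : Fin (2 * m)) : Fin (2 * (m + 1)) := padE m (Sum.inr t)

lemma emb2_val (t : Fin (2 * m)) : (emb2 t).val = 2 + t.val := by
  simp [emb2, padE]; omega

lemma emb2_injective : Function.Injective (emb2 (m := m)) := by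
  intro a b h
  have := congrArg Fin.val h
  simp only [emb2_val] at this
  exact Fin.ext (by omega)

lemma padE_inl_val (b : Fin 2) : ((padE m) (Sum.inl b)).val = b.val := by
  simp [padE]

def pad (η' : Equiv.Perm (Fin (2 * m))) : Equiv.Perm (Fin (2 * (m + 1))) :=
  (padE m).permCongr (Equiv.sumCongr (Equiv.refl (Fin 2)) η')

lemma pad_emb2 (η' : Equiv.Perm (Fin (2 * m))) (t : Fin (2 * m)) :
    pad η' (emb2 t) = emb2 (η' t) := by
  simp [pad, emb2, Equiv.permCongr_apply]

lemma pad_inl (η' : Equiv.Perm (Fin (2 * m))) (b : Fin 2) :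
    pad η' (padE m (Sum.inl b)) = padE m (Sum.inl b) := by
  simp [pad, Equiv.permCongr_apply]

lemma zero_eq_padE : (0 : Fin (2 * (m + 1))) = padE m (Sum.inl 0) := by
  apply Fin.ext; simp [padE_inl_val]

lemma one_eq_padE : (1 : Fin (2 * (m + 1))) = padE m (Sum.inl 1) := by
  apply Fin.ext; simp [padE_inl_val]; exact Nat.mod_eq_of_lt (show 1 < 2 * (m + 1) by omega)

lemma pad_zero (η' : Equiv.Perm (Fin (2 * m))) : pad η' 0 = 0 := by
  rw [zero_eq_padE, pad_inl]

lemma pad_one (η' : Equiv.Perm (Fin (2 * m))) : pad η' 1 = 1 := by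
  rw [one_eq_padE, pad_inl]

lemma sign_pad (η' : Equiv.Perm (Fin (2 * m))) :
    Equiv.Perm.sign (pad η') = Equiv.Perm.sign η' := by
  rw [pad, Equiv.Perm.sign_permCongr, Equiv.Perm.sign_sumCongr]
  simp

/-- the cycle φ_j : 0↦0, 1↦j, k↦k-1 for 2≤k≤j, identity above j. -/
def phi (j : Fin (2 * (m + 1))) : Equiv.Perm (Fin (2 * (m + 1))) :=
  j.cycleRange⁻¹ * Equiv.swap 0 1

lemma phi_zero (j : Fin (2 * (m + 1))) (hj : j ≠ 0) : phi j 0 = 0 := by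
  have h1 : ((1 : Fin (2 * (m + 1)))) = Fin.succ (0 : Fin (2 * m + 1)) := by
    apply Fin.ext; simp
  have h0 : j.succAbove (0 : Fin (2 * m + 1)) = 0 := by
    rw [Fin.succAbove, if_pos]
    · simp
    · simpa using Fin.pos_of_ne_zero hj
  have hc := Fin.cycleRange_succAbove j (0 : Fin (2 * m + 1))
  rw [h0] at hc
  rw [phi, Equiv.Perm.mul_apply, Equiv.swap_apply_left, Equiv.Perm.inv_def,
    Equiv.symm_apply_eq]
  exact h1.trans hc.symm

lemma phi_one (j : Fin (2 * (m + 1))) : phi j 1 = j := by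
  rw [phi, Equiv.Perm.mul_apply, Equiv.swap_apply_right, Equiv.Perm.inv_def,
    Equiv.symm_apply_eq]
  exact (Fin.cycleRange_self j).symm

/-- the monotone embedding Fin (2m) → Fin (2m+2) avoiding 0 and j -/
def emb (j : Fin (2 * (m + 1))) (t : Fin (2 * m)) : Fin (2 * (m + 1)) :=
  j.succAbove t.succ

lemma emb_strictMono (j : Fin (2 * (m + 1))) : StrictMono (emb j) :=
  fun _ _ h => (Fin.strictMono_succAbove j) (Fin.strictMono_succ h)

lemma emb_ne_zero (j : Fin (2 * (m + 1))) (hj : j ≠ 0) (t : Fin (2 * m)) : emb j t ≠ 0 :=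
  Fin.succAbove_ne_zero hj (Fin.succ_ne_zero t)

lemma emb_ne (j : Fin (2 * (m + 1))) (t : Fin (2 * m)) : emb j t ≠ j :=
  Fin.succAbove_ne j t.succ

lemma emb2_eq_succ_succ (t : Fin (2 * m)) :
    emb2 t = Fin.succ (Fin.succ t) := by
  apply Fin.ext; simp [emb2_val]; omega

lemma phi_emb2 (j : Fin (2 * (m + 1))) (t : Fin (2 * m)) : phi j (emb2 t) = emb j t := by
  have hne0 : emb2 t ≠ 0 := by
    intro h; have := congrArg Fin.val h; simp [emb2_val] at this
  have hne1 : emb2 t ≠ 1 := by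
    intro h; have := congrArg Fin.val h; simp [emb2_val] at this; have := Nat.mod_eq_of_lt (show 1 < 2 * (m + 1) by omega); omega
  rw [phi, Equiv.Perm.mul_apply, Equiv.swap_apply_of_ne_of_ne hne0 hne1,
    Equiv.Perm.inv_def, emb2_eq_succ_succ, Equiv.symm_apply_eq]
  exact (Fin.cycleRange_succAbove j t.succ).symm

def FF (b : Fin (2 * m + 1)) (η' : Equiv.Perm (Fin (2 * m))) : Equiv.Perm (Fin (2 * (m + 1))) :=
  phi b.succ * pad η'

lemma FF_zero (b : Fin (2 * m + 1)) (η' : Equiv.Perm (Fin (2 * m))) : FF b η' 0 = 0 := by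
  rw [FF, Equiv.Perm.mul_apply, pad_zero, phi_zero _ (Fin.succ_ne_zero b)]

lemma FF_one (b : Fin (2 * m + 1)) (η' : Equiv.Perm (Fin (2 * m))) : FF b η' 1 = b.succ := by
  rw [FF, Equiv.Perm.mul_apply, pad_one, phi_one]

lemma FF_emb2 (b : Fin (2 * m + 1)) (η' : Equiv.Perm (Fin (2 * m))) (t : Fin (2 * m)) :
    FF b η' (emb2 t) = emb b.succ (η' t) := by
  rw [FF, Equiv.Perm.mul_apply, pad_emb2, phi_emb2]

lemma sign_FF (b : Fin (2 * m + 1)) (η' : Equiv.Perm (Fin (2 * m))) :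
    Equiv.Perm.sign (FF b η') = (-1) ^ (b : ℕ) * Equiv.Perm.sign η' := by
  have h01 : (0 : Fin (2 * (m + 1))) ≠ 1 := by
    intro h; exact absurd (congrArg Fin.val h) (by simp)
  rw [FF, map_mul, sign_pad, phi, map_mul, map_inv, Fin.sign_cycleRange,
    Equiv.Perm.sign_swap h01, Fin.val_succ]
  have hinv : ∀ u : ℤˣ, u⁻¹ = u := fun u => by
    rcases Int.units_eq_one_or u with h | h <;> simp [h]
  rw [hinv, pow_succ, mul_assoc, mul_assoc]
  congr 1
  rw [← mul_assoc]
  norm_num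

lemma pairIdx_zero_zero : pairIdx (0 : Fin (m + 1)) 0 = (0 : Fin (2 * (m + 1))) := by
  apply Fin.ext; simp [pairIdx]

lemma pairIdx_zero_one : pairIdx (0 : Fin (m + 1)) 1 = (1 : Fin (2 * (m + 1))) := by
  apply Fin.ext; simp [pairIdx]

lemma pairIdx_succ (i : Fin m) (c : Fin 2) :
    pairIdx i.succ c = emb2 (pairIdx i c) := by
  apply Fin.ext; simp [pairIdx, emb2_val]; omega

lemma adm_FF_iff (b : Fin (2 * m + 1)) (η' : Equiv.Perm (Fin (2 * m))) :
    Adm (n := m + 1) (FF b η') ↔ Adm (n := m) η' := by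
  constructor
  · rintro ⟨h1, h2⟩
    refine ⟨fun i => ?_, fun i j hij => ?_⟩
    · have := h1 i.succ
      rw [pairIdx_succ, pairIdx_succ, FF_emb2, FF_emb2] at this
      exact (emb_strictMono b.succ).lt_iff_lt.mp this
    · have := h2 i.succ j.succ (Fin.succ_lt_succ_iff.mpr hij)
      rw [pairIdx_succ, pairIdx_succ, FF_emb2, FF_emb2] at this
      exact (emb_strictMono b.succ).lt_iff_lt.mp this
  · rintro ⟨h1, h2⟩
    refine ⟨fun i => ?_, fun i j hij => ?_⟩
    · induction i using Fin.cases with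
      | zero =>
        rw [pairIdx_zero_zero, pairIdx_zero_one, FF_zero, FF_one]
        exact Fin.succ_pos b
      | succ i =>
        rw [pairIdx_succ, pairIdx_succ, FF_emb2, FF_emb2]
        exact (emb_strictMono _) (h1 i)
    · induction j using Fin.cases with
      | zero => exact absurd hij (Fin.not_lt_zero _)
      | succ j =>
        induction i using Fin.cases with
        | zero =>
          rw [pairIdx_zero_zero, FF_zero, pairIdx_succ, FF_emb2]
          exact Fin.pos_of_ne_zero (emb_ne_zero _ (Fin.succ_ne_zero b) _)
        | succ i =>
          rw [pairIdx_succ, pairIdx_succ, FF_emb2, FF_emb2]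
          exact (emb_strictMono _) (h2 i j (Fin.succ_lt_succ_iff.mp hij))

lemma adm_map_zero (η : Equiv.Perm (Fin (2 * (m + 1)))) (h : Adm η) :
    η (0 : Fin (2 * (m + 1))) = 0 := by
  by_contra hne
  set k := η.symm 0 with hk
  have hηk : η k = 0 := η.apply_symm_apply 0
  have hk0 : k ≠ 0 := fun h0 => hne (h0 ▸ hηk)
  have hkv : k.val < 2 * (m + 1) := k.2
  have hc : k.val % 2 = 0 ∨ k.val % 2 = 1 := by omega
  rcases hc with hc | hc
  · set i : Fin (m + 1) := ⟨k.val / 2, by omega⟩ with hi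
    have hi0 : (0 : Fin (m + 1)) < i := by
      rw [Fin.lt_def]
      have : k.val ≠ 0 := fun h0 => hk0 (Fin.ext h0)
      simp [hi]; omega
    have hkeq : k = pairIdx i 0 := by apply Fin.ext; simp [pairIdx, hi]; omega
    have := h.2 0 i hi0
    rw [← hkeq, hηk] at this
    exact absurd this (Fin.not_lt_zero _)
  · set i : Fin (m + 1) := ⟨k.val / 2, by omega⟩ with hi
    have hkeq : k = pairIdx i 1 := by apply Fin.ext; simp [pairIdx, hi]; omega
    have := h.1 i
    rw [← hkeq, hηk] at this
    exact absurd this (Fin.not_lt_zero _)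

def E2 (m : ℕ) : Fin (2 * m) ≃ {k : Fin (2 * (m + 1)) // 2 ≤ k.val} where
  toFun t := ⟨emb2 t, by rw [emb2_val]; omega⟩
  invFun k := ⟨k.1.val - 2, by have := k.1.2; have := k.2; omega⟩
  left_inv t := by apply Fin.ext; simp [emb2_val]
  right_inv k := by apply Subtype.ext; apply Fin.ext; rw [emb2_val]; have := k.2; simp; omega

lemma E2_coe (t : Fin (2 * m)) : ((E2 m t : {k : Fin (2 * (m + 1)) // 2 ≤ k.val}) : Fin (2 * (m + 1))) = emb2 t := rfl

lemma fin_cases3 (k : Fin (2 * (m + 1))) : k = 0 ∨ k = 1 ∨ ∃ t : Fin (2 * m), k = emb2 t := by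
  have hkv := k.2
  rcases Nat.lt_or_ge k.val 2 with h | h
  · rcases Nat.lt_or_ge k.val 1 with h1 | h1
    · left; apply Fin.ext; exact (show k.val = 0 by omega)
    · right; left; apply Fin.ext; simp; have := Nat.mod_eq_of_lt (show 1 < 2 * (m + 1) by omega); omega
  · right; right
    exact ⟨⟨k.val - 2, by omega⟩, Fin.ext (by rw [emb2_val]; simp; omega)⟩

lemma pf_rec {R : Type*} [CommRing R] (m : ℕ) (B : Matrix (Fin (2 * (m + 1))) (Fin (2 * (m + 1))) R) :
    pfaffian B = ∑ b : Fin (2 * m + 1), (-1 : R) ^ (b : ℕ) * B 0 b.succ *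
      pfaffian (B.submatrix (emb b.succ) (emb b.succ)) := by
  have key : ∑ η ∈ univ.filter (Adm (n := m + 1)),
      ((Equiv.Perm.sign η : ℤ) : R) * ∏ i : Fin (m + 1), B (η (pairIdx i 0)) (η (pairIdx i 1))
      = ∑ p ∈ (univ : Finset (Fin (2 * m + 1))) ×ˢ univ.filter (Adm (n := m)),
        (-1 : R) ^ (p.1 : ℕ) * B 0 p.1.succ *
          (((Equiv.Perm.sign p.2 : ℤ) : R) *
            ∏ i : Fin m, B (emb p.1.succ (p.2 (pairIdx i 0))) (emb p.1.succ (p.2 (pairIdx i 1)))) := by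
    refine (Finset.sum_bij (fun p (_ : p ∈ _) => FF p.1 p.2) ?_ ?_ ?_ ?_).symm
    · rintro ⟨b, η'⟩ hp
      rw [Finset.mem_product, Finset.mem_filter] at hp
      exact Finset.mem_filter.mpr ⟨Finset.mem_univ _, (adm_FF_iff b η').mpr hp.2.2⟩
    · rintro ⟨b1, η1⟩ h1 ⟨b2, η2⟩ h2 heq
      have hb : b1 = b2 := by
        have := congrArg (fun σ : Equiv.Perm (Fin (2 * (m + 1))) => σ 1) heq
        simp only [FF_one] at this
        exact Fin.succ_injective _ this
      subst hb
      have hη : η1 = η2 := by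
        apply Equiv.ext; intro t
        have := congrArg (fun σ : Equiv.Perm (Fin (2 * (m + 1))) => σ (emb2 t)) heq
        simp only [FF_emb2] at this
        exact (emb_strictMono _).injective this
      rw [hη]
    · intro η hη
      rw [Finset.mem_filter] at hη
      have hadm := hη.2
      have h0 : η 0 = 0 := adm_map_zero η hadm
      have h1ne : η 1 ≠ 0 := by
        intro h
        have : (1 : Fin (2 * (m + 1))) = 0 := η.injective (h.trans h0.symm)
        exact absurd (congrArg Fin.val this) (by simp)
      set j := η 1 with hj
      set b := j.pred h1ne with hb
      set σ := (phi j)⁻¹ * η with hσ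
      have hσ0 : σ 0 = 0 := by
        rw [hσ, Equiv.Perm.mul_apply, h0, Equiv.Perm.inv_def, Equiv.symm_apply_eq,
          phi_zero j h1ne]
      have hσ1 : σ 1 = 1 := by
        rw [hσ, Equiv.Perm.mul_apply, ← hj, Equiv.Perm.inv_def, Equiv.symm_apply_eq, phi_one]
      have hval : ∀ v : Fin (2 * (m + 1)), 2 ≤ v.val ↔ (v ≠ 0 ∧ v ≠ 1) := by
        intro v
        constructor
        · intro h
          constructor <;> intro hh <;> rw [hh] at h <;> simp [Nat.mod_eq_of_lt (show 1 < 2 * (m + 1) by omega)] at h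
        · intro ⟨hv0, hv1⟩
          have h0' : v.val ≠ 0 := fun h => hv0 (Fin.ext (by simpa using h))
          have h1' : v.val ≠ 1 := fun h => hv1 (Fin.ext (by simpa [Nat.mod_eq_of_lt (show 1 < 2 * (m + 1) by omega)] using h))
          omega
      have hp : ∀ k : Fin (2 * (m + 1)), 2 ≤ k.val ↔ 2 ≤ (σ k).val := by
        intro k
        rw [hval, hval]
        constructor
        · rintro ⟨hk0, hk1⟩
          exact ⟨fun h => hk0 (σ.injective (h.trans hσ0.symm)),
                 fun h => hk1 (σ.injective (h.trans hσ1.symm))⟩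
        · rintro ⟨hk0, hk1⟩
          exact ⟨fun h => hk0 (by rw [h, hσ0]), fun h => hk1 (by rw [h, hσ1])⟩
      set η' := ((E2 m).permCongr).symm (σ.subtypePerm (fun k => (hp k).symm)) with hη'
      have hemb2 : ∀ k : {k : Fin (2 * (m + 1)) // 2 ≤ k.val}, emb2 ((E2 m).symm k) = k.1 :=
        fun k => by rw [← E2_coe, Equiv.apply_symm_apply]
      have hη'app : ∀ t, emb2 (η' t) = σ (emb2 t) := by
        intro t
        rw [hη', Equiv.permCongr_symm, Equiv.permCongr_apply, hemb2]
        rfl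
      have hFF : FF b η' = η := by
        apply Equiv.ext; intro k
        rcases fin_cases3 k with rfl | rfl | ⟨t, rfl⟩
        · rw [FF_zero, h0]
        · rw [FF_one, hb, Fin.succ_pred, hj]
        · rw [FF_emb2, hb, Fin.succ_pred]
          have : emb j (η' t) = phi j (emb2 (η' t)) := (phi_emb2 j (η' t)).symm
          rw [this, hη'app, hσ, Equiv.Perm.mul_apply, Equiv.Perm.inv_def, Equiv.apply_symm_apply]
      refine ⟨(b, η'), ?_, hFF⟩
      rw [Finset.mem_product, Finset.mem_filter]
      refine ⟨Finset.mem_univ _, Finset.mem_univ _, ?_⟩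
      rw [← adm_FF_iff b η', hFF]
      exact hadm
    · rintro ⟨b, η'⟩ hp
      have hsign : ((Equiv.Perm.sign (FF b η') : ℤ) : R)
          = (-1 : R) ^ (b : ℕ) * ((Equiv.Perm.sign η' : ℤ) : R) := by
        rw [sign_FF]
        push_cast [Units.val_mul, Units.val_pow_eq_pow_val]
        norm_num
      have hprod : ∏ i : Fin (m + 1), B ((FF b η') (pairIdx i 0)) ((FF b η') (pairIdx i 1))
          = B 0 b.succ * ∏ i : Fin m,
              B (emb b.succ (η' (pairIdx i 0))) (emb b.succ (η' (pairIdx i 1))) := by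
        rw [Fin.prod_univ_succ]
        congr 1
        · rw [pairIdx_zero_zero, pairIdx_zero_one, FF_zero, FF_one]
        · refine Finset.prod_congr rfl fun i _ => ?_
          rw [pairIdx_succ, pairIdx_succ, FF_emb2, FF_emb2]
      rw [hsign, hprod]
      ring
  rw [pfaffian_eq_sum_filter, key, Finset.sum_product]
  refine Finset.sum_congr rfl fun b _ => ?_
  rw [pfaffian_eq_sum_filter, Finset.mul_sum]
  refine Finset.sum_congr rfl fun η' _ => ?_
  simp only [Matrix.submatrix_apply]

section B
open Polynomial

lemma one_sub_mul_ne_zero {a b : ℝ} (ha : a ∈ Set.Ioo (-1:ℝ) 1) (hb : b ∈ Set.Ioo (-1:ℝ) 1) :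
    1 - a * b ≠ 0 := by
  obtain ⟨ha1, ha2⟩ := ha; obtain ⟨hb1, hb2⟩ := hb
  nlinarith

noncomputable section

variable {m : ℕ} (z : Fin (2 * m + 1) → ℝ)

/-- the residue weights -/
def ww (j : Fin (2 * m + 1)) : ℝ := ∏ k ∈ univ.erase j, (1 - z j * z k) / (z j - z k)

def PA : ℝ[X] := ∏ k, (X - C (z k))
def PB : ℝ[X] := ∏ k, (1 - C (z k) * X)
def PAj (j : Fin (2 * m + 1)) : ℝ[X] := ∏ k ∈ univ.erase j, (X - C (z k))
def PG : ℝ[X] := ∑ j, C (ww z j) * PAj z j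

lemma eval_PA (r : ℝ) : (PA z).eval r = ∏ k, (r - z k) := by
  simp [PA, eval_prod]

lemma eval_PB (r : ℝ) : (PB z).eval r = ∏ k, (1 - z k * r) := by
  simp [PB, eval_prod]

lemma eval_PAj (j : Fin (2 * m + 1)) (r : ℝ) :
    (PAj z j).eval r = ∏ k ∈ univ.erase j, (r - z k) := by
  simp [PAj, eval_prod]

lemma monic_PA : (PA z).Monic := monic_prod_of_monic _ _ fun k _ => monic_X_sub_C (z k)

lemma natDegree_PA : (PA z).natDegree = 2 * m + 1 := by
  rw [PA, natDegree_prod_of_monic _ _ fun k _ => monic_X_sub_C (z k)]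
  simp

lemma monic_PAj (j : Fin (2 * m + 1)) : (PAj z j).Monic :=
  monic_prod_of_monic _ _ fun k _ => monic_X_sub_C (z k)

lemma natDegree_PAj (j : Fin (2 * m + 1)) : (PAj z j).natDegree = 2 * m := by
  rw [PAj, natDegree_prod_of_monic _ _ fun k _ => monic_X_sub_C (z k)]
  simp [Finset.card_erase_of_mem]

lemma coeff_PAj (j : Fin (2 * m + 1)) : (PAj z j).coeff (2 * m) = 1 := by
  have := (monic_PAj z j).coeff_natDegree
  rwa [natDegree_PAj] at this

lemma natDegree_PG : (PG z).natDegree ≤ 2 * m := by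
  refine natDegree_sum_le_of_forall_le _ _ fun j _ => ?_
  exact le_trans (natDegree_C_mul_le _ _) (le_of_eq (natDegree_PAj z j))

lemma natDegree_prod_one_sub_le {ι : Type*} (s : Finset ι) (v : ι → ℝ) :
    (∏ k ∈ s, ((1 : ℝ[X]) - C (v k) * X)).natDegree ≤ #s := by
  refine le_trans (natDegree_prod_le _ _) ?_
  have h : ∀ k ∈ s, ((1 : ℝ[X]) - C (v k) * X).natDegree ≤ 1 := fun k _ =>
    le_trans (natDegree_sub_le _ _) (max_le (by simp)
      (le_trans (natDegree_C_mul_le _ _) (le_of_eq natDegree_X)))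
  exact le_trans (Finset.sum_le_card_nsmul s _ 1 h) (by simp)

lemma natDegree_PB : (PB z).natDegree ≤ 2 * m + 1 := by
  have := natDegree_prod_one_sub_le (univ : Finset (Fin (2 * m + 1))) z
  simpa [PB] using this

variable (hz : ∀ i, z i ∈ Set.Ioo (-1:ℝ) 1) (hinj : Function.Injective z)

section W
include hz hinj

lemma eval_PG_node (i : Fin (2 * m + 1)) :
    (PG z).eval (z i) = ∏ k ∈ univ.erase i, (1 - z i * z k) := by
  rw [PG, eval_finset_sum]
  rw [Finset.sum_eq_single i]
  · rw [eval_mul, eval_C, eval_PAj]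
    rw [ww, ← Finset.prod_mul_distrib]
    refine Finset.prod_congr rfl fun k hk => ?_
    have hik : z i - z k ≠ 0 :=
      sub_ne_zero.mpr (fun h => (Finset.mem_erase.mp hk).1.symm (hinj h))
    field_simp
  · intro j _ hji
    rw [eval_mul, eval_PAj]
    rw [Finset.prod_eq_zero (Finset.mem_erase.mpr ⟨hji.symm, Finset.mem_univ i⟩) (sub_self (z i))]
    ring
  · intro h; exact absurd (Finset.mem_univ i) h

/-- The interpolation identity `PB = (1 - X²)·PG + X·PA`. -/
lemma PB_eq : PB z = (1 - X ^ 2) * PG z + X * PA z := by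
  have hK : PB z - (1 - X ^ 2) * PG z - X * PA z = 0 := by
    set s : Finset ℝ := insert (1:ℝ) (insert (-1:ℝ) (univ.image z)) with hs
    have hnot1 : (1:ℝ) ∉ insert (-1:ℝ) (univ.image z) := by
      simp only [Finset.mem_insert, Finset.mem_image]
      push_neg
      refine ⟨by norm_num, fun k _ h => ?_⟩
      exact absurd h (ne_of_lt (hz k).2)
    have hnotm1 : (-1:ℝ) ∉ univ.image z := by
      simp only [Finset.mem_image]
      push_neg
      exact fun k _ h => absurd h (ne_of_gt (hz k).1)
    have hcards : #s = 2 * m + 3 := by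
      rw [hs, Finset.card_insert_of_notMem hnot1, Finset.card_insert_of_notMem hnotm1,
        Finset.card_image_of_injective _ hinj]
      simp
    apply Polynomial.eq_zero_of_natDegree_lt_card_of_eval_eq_zero' _ s
    · intro r hr
      rw [hs] at hr
      simp only [Finset.mem_insert, Finset.mem_image] at hr
      rcases hr with rfl | rfl | ⟨i, _, rfl⟩
      · simp only [eval_sub, eval_mul, eval_add, eval_one, eval_pow, eval_X, eval_PA, eval_PB]
        have : ∏ k, (1 - z k * 1) = ∏ k, ((1:ℝ) - z k) := by
          refine Finset.prod_congr rfl fun k _ => by ring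
        rw [this]
        ring
      · simp only [eval_sub, eval_mul, eval_pow, eval_one, eval_X, eval_PA, eval_PB]
        have h1 : ∏ k, (1 - z k * (-1)) = ∏ k, ((1:ℝ) + z k) := by
          refine Finset.prod_congr rfl fun k _ => by ring
        have h2 : ∏ k, ((-1:ℝ) - z k) = - ∏ k, ((1:ℝ) + z k) := by
          have hc : ∀ k ∈ (univ : Finset (Fin (2 * m + 1))), ((-1:ℝ) - z k) = (-1) * (1 + z k) :=
            fun k _ => by ring
          rw [Finset.prod_congr rfl hc, Finset.prod_mul_distrib, Finset.prod_const,
            Finset.card_univ, Fintype.card_fin, Odd.neg_one_pow ⟨m, by ring⟩]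
          ring
        rw [h1, h2]
        ring
      · simp only [eval_sub, eval_mul, eval_pow, eval_one, eval_X, eval_PA, eval_PB,
          eval_PG_node z hz hinj i]
        have hA : ∏ k, (z i - z k) = 0 := Finset.prod_eq_zero (Finset.mem_univ i) (sub_self (z i))
        rw [hA, ← Finset.mul_prod_erase univ (fun k => 1 - z k * z i) (Finset.mem_univ i)]
        have : ∏ k ∈ univ.erase i, (1 - z k * z i) = ∏ k ∈ univ.erase i, (1 - z i * z k) :=
          Finset.prod_congr rfl fun k _ => by ring
        rw [this]
        ring
    · rw [hcards]
      have d1 : ((1 - X ^ 2) * PG z).natDegree ≤ 2 * m + 2 := by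
        refine le_trans (natDegree_mul_le) ?_
        have : ((1:ℝ[X]) - X ^ 2).natDegree ≤ 2 :=
          le_trans (natDegree_sub_le _ _) (max_le (by simp) (by simp))
        have := natDegree_PG z
        omega
      have d2 : (X * PA z).natDegree ≤ 2 * m + 2 := by
        refine le_trans (natDegree_mul_le) ?_
        rw [natDegree_X, natDegree_PA]
        omega
      have d3 : (PB z).natDegree ≤ 2 * m + 2 := le_trans (natDegree_PB z) (by omega)
      have := natDegree_sub_le (PB z - (1 - X ^ 2) * PG z) (X * PA z)
      have := natDegree_sub_le (PB z) ((1 - X ^ 2) * PG z)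
      omega
  linear_combination hK

lemma coeff_PG : (PG z).coeff (2 * m) = ∑ j, ww z j := by
  rw [PG, finset_sum_coeff]
  refine Finset.sum_congr rfl fun j _ => ?_
  rw [coeff_C_mul, coeff_PAj]
  ring

/-- The residue-sum identity: `∑ j, w j = 1`. -/
lemma sum_ww : ∑ j, ww z j = 1 := by
  have h := congrArg (fun p : ℝ[X] => p.coeff (2 * m + 2)) (PB_eq z hz hinj)
  simp only [coeff_add] at h
  have h1 : (PB z).coeff (2 * m + 2) = 0 :=
    coeff_eq_zero_of_natDegree_lt (lt_of_le_of_lt (natDegree_PB z) (by omega))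
  have h2 : ((1 - X ^ 2) * PG z).coeff (2 * m + 2) = - (PG z).coeff (2 * m) := by
    rw [sub_mul, one_mul, coeff_sub, coeff_X_pow_mul (PG z) 2 (2 * m)]
    rw [coeff_eq_zero_of_natDegree_lt (lt_of_le_of_lt (natDegree_PG z) (by omega))]
    ring
  have h3 : (X * PA z).coeff (2 * m + 2) = 1 := by
    have : (X * PA z).coeff (2 * m + 1 + 1) = (PA z).coeff (2 * m + 1) := coeff_X_mul _ _
    rw [show 2 * m + 2 = 2 * m + 1 + 1 by omega, this, ← natDegree_PA z]
    exact (monic_PA z).coeff_natDegree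
  rw [h1, h2, h3, coeff_PG z hz hinj] at h
  linarith

end W

section Main
include hz hinj

/-- The main polynomial identity behind the expansion step. -/
lemma keyP :
    (∑ j, C (ww z j) * (X - C (z j)) * ∏ k ∈ univ.erase j, (1 - C (z k) * X)) = PA z := by
  set PP : ℝ[X] := ∑ j, C (ww z j) * (X - C (z j)) * ∏ k ∈ univ.erase j, (1 - C (z k) * X)
    with hPP
  have heval : ∀ r : ℝ, PP.eval r
      = ∑ j, ww z j * (r - z j) * ∏ k ∈ univ.erase j, (1 - z k * r) := by
    intro r
    rw [hPP, eval_finset_sum]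
    refine Finset.sum_congr rfl fun j _ => ?_
    simp [eval_prod]
  set s : Finset ℝ := insert (1:ℝ) (insert (-1:ℝ)
      ((univ.filter (fun i => z i ≠ 0)).image (fun i => (z i)⁻¹))) with hs
  have hnot1 : (1:ℝ) ∉ insert (-1:ℝ) ((univ.filter (fun i => z i ≠ 0)).image (fun i => (z i)⁻¹)) := by
    simp only [Finset.mem_insert, Finset.mem_image, Finset.mem_filter]
    push_neg
    refine ⟨by norm_num, fun k _ h => ?_⟩
    rw [inv_eq_one] at h
    exact absurd h (ne_of_lt (hz k).2)
  have hnotm1 : (-1:ℝ) ∉ (univ.filter (fun i => z i ≠ 0)).image (fun i => (z i)⁻¹) := by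
    simp only [Finset.mem_image, Finset.mem_filter]
    push_neg
    intro k _ h
    rw [inv_eq_iff_eq_inv] at h
    norm_num at h
    exact absurd h (ne_of_gt (hz k).1)
  have hcards : 2 * m + 2 ≤ #s := by
    have hinjOn : Set.InjOn (fun i => (z i)⁻¹) (univ.filter (fun i => z i ≠ 0)) := by
      intro a _ b _ h
      exact hinj (inv_injective h)
    have himg : #((univ.filter (fun i => z i ≠ 0)).image (fun i => (z i)⁻¹))
        = #(univ.filter (fun i => z i ≠ 0)) := Finset.card_image_of_injOn hinjOn
    have hzero : #(univ.filter (fun i => z i = 0)) ≤ 1 := by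
      refine Finset.card_le_one.mpr fun a ha b hb => ?_
      rw [Finset.mem_filter] at ha hb
      exact hinj (ha.2.trans hb.2.symm)
    have hsplit := Finset.card_filter_add_card_filter_not
      (s := (univ : Finset (Fin (2 * m + 1)))) (p := fun i => z i = 0)
    rw [Finset.card_univ, Fintype.card_fin] at hsplit
    have : #(univ.filter (fun i => ¬ z i = 0)) = #(univ.filter (fun i => z i ≠ 0)) := rfl
    rw [hs, Finset.card_insert_of_notMem hnot1, Finset.card_insert_of_notMem hnotm1, himg]
    omega
  have hD : PP - PA z = 0 := by
    apply Polynomial.eq_zero_of_natDegree_lt_card_of_eval_eq_zero' _ s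
    · intro r hr
      rw [hs] at hr
      simp only [Finset.mem_insert, Finset.mem_image, Finset.mem_filter] at hr
      rw [eval_sub, heval, eval_PA, sub_eq_zero]
      rcases hr with rfl | rfl | ⟨i, ⟨_, hi0⟩, rfl⟩
      · have hterm : ∀ j ∈ (univ : Finset (Fin (2 * m + 1))),
            ww z j * ((1:ℝ) - z j) * ∏ k ∈ univ.erase j, (1 - z k * 1)
              = ww z j * ∏ k, ((1:ℝ) - z k) := by
          intro j _
          rw [← Finset.mul_prod_erase univ (fun k => (1:ℝ) - z k) (Finset.mem_univ j)]
          rw [show ∏ k ∈ univ.erase j, ((1:ℝ) - z k * 1) = ∏ k ∈ univ.erase j, ((1:ℝ) - z k)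
            from Finset.prod_congr rfl fun k _ => by ring]
          ring
        rw [Finset.sum_congr rfl hterm, ← Finset.sum_mul, sum_ww z hz hinj, one_mul]
      · have hterm : ∀ j ∈ (univ : Finset (Fin (2 * m + 1))),
            ww z j * ((-1:ℝ) - z j) * ∏ k ∈ univ.erase j, (1 - z k * (-1))
              = ww z j * (- ∏ k, ((1:ℝ) + z k)) := by
          intro j _
          rw [← Finset.mul_prod_erase univ (fun k => (1:ℝ) + z k) (Finset.mem_univ j)]
          rw [show ∏ k ∈ univ.erase j, ((1:ℝ) - z k * (-1)) = ∏ k ∈ univ.erase j, ((1:ℝ) + z k)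
            from Finset.prod_congr rfl fun k _ => by ring]
          ring
        rw [Finset.sum_congr rfl hterm, ← Finset.sum_mul, sum_ww z hz hinj, one_mul]
        have h2 : ∏ k, ((z:Fin (2*m+1) → ℝ) k |> fun t => (-1:ℝ) - t) = - ∏ k, ((1:ℝ) + z k) := by
          have hc : ∀ k ∈ (univ : Finset (Fin (2 * m + 1))), ((-1:ℝ) - z k) = (-1) * (1 + z k) :=
            fun k _ => by ring
          rw [Finset.prod_congr rfl hc, Finset.prod_mul_distrib, Finset.prod_const,
            Finset.card_univ, Fintype.card_fin, Odd.neg_one_pow ⟨m, by ring⟩]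
          ring
        exact h2.symm
      · rw [Finset.sum_eq_single i]
        · rw [← Finset.mul_prod_erase univ (fun k => (z i)⁻¹ - z k) (Finset.mem_univ i)]
          have hpt : ∏ k ∈ univ.erase i, ((z i)⁻¹ - z k)
              = ∏ k ∈ univ.erase i, ((1 - z i * z k) / (z i - z k) * (1 - z k * (z i)⁻¹)) := by
            refine Finset.prod_congr rfl fun k hk => ?_
            have hik : z i - z k ≠ 0 :=
              sub_ne_zero.mpr fun h => (Finset.mem_erase.mp hk).1.symm (hinj h)
            field_simp
          rw [hpt, Finset.prod_mul_distrib, ww]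
          ring
        · intro j _ hji
          rw [Finset.prod_eq_zero (Finset.mem_erase.mpr ⟨hji.symm, Finset.mem_univ i⟩)
            (by field_simp; norm_num : 1 - z i * (z i)⁻¹ = 0)]
          ring
        · intro h; exact absurd (Finset.mem_univ i) h
    · refine lt_of_le_of_lt ?_ (lt_of_lt_of_le (by omega : 2 * m + 1 < 2 * m + 2) hcards)
      refine le_trans (natDegree_sub_le _ _) (max_le ?_ (le_of_eq (natDegree_PA z)))
      refine natDegree_sum_le_of_forall_le _ _ fun j _ => ?_
      refine le_trans natDegree_mul_le ?_
      have hA : (C (ww z j) * (X - C (z j))).natDegree ≤ 1 :=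
        le_trans (natDegree_C_mul_le _ _) (le_of_eq (natDegree_X_sub_C _))
      have hBp := natDegree_prod_one_sub_le (univ.erase j) z
      rw [Finset.card_erase_of_mem (Finset.mem_univ j), Finset.card_univ, Fintype.card_fin] at hBp
      omega
  linear_combination hD

/-- The key rational-function identity. -/
lemma keyB (y : ℝ) (hy : y ∈ Set.Ioo (-1:ℝ) 1) :
    ∑ j, (y - z j) / (1 - y * z j) * ∏ k ∈ univ.erase j, ((z j - z k) / (1 - z j * z k))⁻¹
      = ∏ k, (y - z k) / (1 - y * z k) := by
  have hP := congrArg (Polynomial.eval y) (keyP z hz hinj)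
  rw [eval_finset_sum, eval_PA] at hP
  have hPterm : ∀ j ∈ (univ : Finset (Fin (2 * m + 1))),
      (C (ww z j) * (X - C (z j)) * ∏ k ∈ univ.erase j, (1 - C (z k) * X)).eval y
        = ww z j * (y - z j) * ∏ k ∈ univ.erase j, (1 - z k * y) := by
    intro j _
    simp [eval_prod]
  rw [Finset.sum_congr rfl hPterm] at hP
  have hden : ∀ k, (1:ℝ) - z k * y ≠ 0 := fun k => by
    have := one_sub_mul_ne_zero (hz k) hy
    intro h; apply this; linarith [h]
  have hstep : ∀ j, (y - z j) / (1 - y * z j) * ∏ k ∈ univ.erase j, ((z j - z k) / (1 - z j * z k))⁻¹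
      = ww z j * (y - z j) * (∏ k ∈ univ.erase j, (1 - z k * y)) / ∏ k, (1 - z k * y) := by
    intro j
    have hww : ∏ k ∈ univ.erase j, ((z j - z k) / (1 - z j * z k))⁻¹ = ww z j := by
      rw [ww]; exact Finset.prod_congr rfl fun k _ => by rw [inv_div]
    have hEne : ∏ k ∈ univ.erase j, ((1:ℝ) - z k * y) ≠ 0 :=
      Finset.prod_ne_zero_iff.mpr fun k _ => hden k
    have hjne : (1:ℝ) - z j * y ≠ 0 := hden j
    rw [hww, ← Finset.mul_prod_erase univ (fun k => 1 - z k * y) (Finset.mem_univ j),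
      mul_comm y (z j), div_mul_eq_mul_div, div_eq_div_iff hjne (mul_ne_zero hjne hEne)]
    ring
  rw [Finset.sum_congr rfl fun j _ => hstep j, ← Finset.sum_div, hP]
  rw [← Finset.prod_div_distrib]
  exact Finset.prod_congr rfl fun k _ => by rw [mul_comm y (z k)]

end Main
end
end B

section C

lemma Qsplit {ι : Type*} [LinearOrder ι] [DecidableEq ι] (c : ι → ι → ℝ) (S : Finset ι)
    (j : ι) (hj : j ∈ S) :
    ∏ a ∈ S, ∏ b ∈ S, (if a < b then c a b else 1)
      = (∏ a ∈ S.erase j, ∏ b ∈ S.erase j, (if a < b then c a b else 1))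
        * ∏ k ∈ S.erase j, (if j < k then c j k else c k j) := by
  rw [← Finset.mul_prod_erase S _ hj,
    ← Finset.mul_prod_erase S (fun b => if j < b then c j b else 1) hj,
    if_neg (lt_irrefl j), one_mul]
  have hinner : ∀ a ∈ S.erase j, ∏ b ∈ S, (if a < b then c a b else 1)
      = (if a < j then c a j else 1) * ∏ b ∈ S.erase j, (if a < b then c a b else 1) :=
    fun a _ => (Finset.mul_prod_erase S _ hj).symm
  rw [Finset.prod_congr rfl hinner, Finset.prod_mul_distrib, ← mul_assoc]
  have hD : (∏ b ∈ S.erase j, (if j < b then c j b else 1))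
      * (∏ a ∈ S.erase j, (if a < j then c a j else 1))
      = ∏ k ∈ S.erase j, (if j < k then c j k else c k j) := by
    rw [← Finset.prod_mul_distrib]
    refine Finset.prod_congr rfl fun k hk => ?_
    have hkj : k ≠ j := (Finset.mem_erase.mp hk).1
    rcases lt_trichotomy j k with h | h | h
    · rw [if_pos h, if_neg (asymm h), if_pos h, mul_one]
    · exact absurd h.symm hkj
    · rw [if_neg (asymm h), if_pos h, if_neg (not_lt_of_gt h), one_mul]
  rw [hD, mul_comm]

lemma count_lt {m : ℕ} (j : Fin (2 * (m + 1))) (hj : j ≠ 0) :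
    #((((univ : Finset (Fin (2 * (m + 1)))).erase 0).erase j).filter (· < j)) = j.val - 1 := by
  have hset : (((univ : Finset (Fin (2 * (m + 1)))).erase 0).erase j).filter (· < j)
      = Finset.Ioo 0 j := by
    ext k
    simp only [Finset.mem_filter, Finset.mem_erase, Finset.mem_univ, and_true, Finset.mem_Ioo]
    constructor
    · rintro ⟨⟨_, hk0⟩, hkj⟩
      exact ⟨Fin.pos_of_ne_zero hk0, hkj⟩
    · rintro ⟨h0, hkj⟩
      exact ⟨⟨ne_of_lt hkj, Fin.pos_iff_ne_zero.mp h0⟩, hkj⟩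
  rw [hset, Fin.card_Ioo]
  simp

lemma prod_erase_zero_eq {m : ℕ} (g : Fin (2 * (m + 1)) → ℝ) :
    ∏ k ∈ (univ : Finset (Fin (2 * (m + 1)))).erase 0, g k = ∏ t : Fin (2 * m + 1), g t.succ := by
  refine (Finset.prod_bij (fun t (_ : t ∈ (univ : Finset (Fin (2 * m + 1)))) => t.succ)
    ?_ ?_ ?_ ?_).symm
  · intro t _
    exact Finset.mem_erase.mpr ⟨Fin.succ_ne_zero t, Finset.mem_univ _⟩
  · intro a _ b _ h
    exact Fin.succ_injective _ h
  · intro k hk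
    have hk0 : k ≠ 0 := (Finset.mem_erase.mp hk).1
    exact ⟨k.pred hk0, Finset.mem_univ _, Fin.succ_pred k hk0⟩
  · intro t _; rfl

lemma prod_erase_both_eq {m : ℕ} (b : Fin (2 * m + 1)) (g : Fin (2 * (m + 1)) → ℝ) :
    ∏ k ∈ ((univ : Finset (Fin (2 * (m + 1)))).erase 0).erase b.succ, g k
      = ∏ t ∈ (univ : Finset (Fin (2 * m + 1))).erase b, g t.succ := by
  refine (Finset.prod_bij (fun t (_ : t ∈ (univ : Finset (Fin (2 * m + 1))).erase b) => t.succ)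
    ?_ ?_ ?_ ?_).symm
  · intro t ht
    exact Finset.mem_erase.mpr ⟨fun h => (Finset.mem_erase.mp ht).1 (Fin.succ_injective _ h),
      Finset.mem_erase.mpr ⟨Fin.succ_ne_zero t, Finset.mem_univ _⟩⟩
  · intro a _ b _ h
    exact Fin.succ_injective _ h
  · intro k hk
    obtain ⟨hkj, hk'⟩ := Finset.mem_erase.mp hk
    have hk0 : k ≠ 0 := (Finset.mem_erase.mp hk').1
    refine ⟨k.pred hk0, Finset.mem_erase.mpr ⟨?_, Finset.mem_univ _⟩, Fin.succ_pred k hk0⟩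
    intro h
    exact hkj (by rw [← Fin.succ_pred k hk0, h])
  · intro t _; rfl

lemma image_emb {m : ℕ} (b : Fin (2 * m + 1)) :
    Finset.image (emb b.succ) univ
      = ((univ : Finset (Fin (2 * (m + 1)))).erase 0).erase b.succ := by
  apply Finset.eq_of_subset_of_card_le
  · intro k hk
    obtain ⟨t, _, rfl⟩ := Finset.mem_image.mp hk
    exact Finset.mem_erase.mpr ⟨emb_ne _ _,
      Finset.mem_erase.mpr ⟨emb_ne_zero _ (Fin.succ_ne_zero b) _, Finset.mem_univ _⟩⟩
  · rw [Finset.card_erase_of_mem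
        (Finset.mem_erase.mpr ⟨Fin.succ_ne_zero b, Finset.mem_univ _⟩),
      Finset.card_erase_of_mem (Finset.mem_univ _),
      Finset.card_image_of_injective _ (emb_strictMono b.succ).injective]
    simp

end C

theorem schur_inj : ∀ (n : ℕ) (x : Fin (2 * n) → ℝ),
    (∀ i, x i ∈ Set.Ioo (-1 : ℝ) 1) → Function.Injective x →
    pfaffian (Matrix.of fun i j => (x i - x j) / (1 - x i * x j))
      = ∏ i, ∏ j, if i < j then (x i - x j) / (1 - x i * x j) else 1 := by
  intro n
  induction n with
  | zero =>
    intro x _ _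
    haveI : Subsingleton (Equiv.Perm (Fin (2 * 0))) :=
      ⟨fun a b => Equiv.ext fun t => t.elim0⟩
    rw [pfaffian,
      show (univ : Finset (Equiv.Perm (Fin (2 * 0)))) = {1} from
        Finset.eq_singleton_iff_unique_mem.mpr ⟨Finset.mem_univ 1, fun η _ => Subsingleton.elim η 1⟩,
      Finset.sum_singleton, if_pos ⟨fun i => i.elim0, fun i j => i.elim0⟩]
    simp
  | succ m IH =>
    intro x hx hinj
    have hc_ne : ∀ i j : Fin (2 * (m + 1)), i ≠ j → (x i - x j) / (1 - x i * x j) ≠ 0 :=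
      fun i j h => div_ne_zero (sub_ne_zero.mpr (fun hh => h (hinj hh)))
        (one_sub_mul_ne_zero (hx i) (hx j))
    have hskew : ∀ i j : Fin (2 * (m + 1)),
        (x j - x i) / (1 - x j * x i) = -((x i - x j) / (1 - x i * x j)) := by
      intro i j
      rw [mul_comm (x j) (x i), ← neg_div, neg_sub]
    rw [pf_rec]
    have hminor : ∀ b : Fin (2 * m + 1),
        pfaffian ((Matrix.of fun i j => (x i - x j) / (1 - x i * x j)).submatrix
            (emb b.succ) (emb b.succ))
          = ∏ i : Fin (2 * m), ∏ j : Fin (2 * m),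
              if i < j then (x (emb b.succ i) - x (emb b.succ j))
                / (1 - x (emb b.succ i) * x (emb b.succ j)) else 1 := by
      intro b
      exact IH (fun t => x (emb b.succ t)) (fun t => hx _)
        (hinj.comp (emb_strictMono b.succ).injective)
    have hQminor : ∀ b : Fin (2 * m + 1),
        (∏ i : Fin (2 * m), ∏ j : Fin (2 * m),
            if i < j then (x (emb b.succ i) - x (emb b.succ j))
              / (1 - x (emb b.succ i) * x (emb b.succ j)) else 1)
          = ∏ a ∈ ((univ : Finset (Fin (2 * (m + 1)))).erase 0).erase b.succ,
              ∏ bb ∈ ((univ : Finset (Fin (2 * (m + 1)))).erase 0).erase b.succ,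
                (if a < bb then (x a - x bb) / (1 - x a * x bb) else 1) := by
      intro b
      rw [← image_emb]
      rw [Finset.prod_image (fun a _ a' _ h => (emb_strictMono b.succ).injective h)]
      refine Finset.prod_congr rfl fun i _ => ?_
      rw [Finset.prod_image (fun a _ a' _ h => (emb_strictMono b.succ).injective h)]
      refine Finset.prod_congr rfl fun j _ => ?_
      by_cases h : i < j
      · rw [if_pos h, if_pos ((emb_strictMono b.succ).lt_iff_lt.mpr h)]
      · rw [if_neg h, if_neg (fun hh => h ((emb_strictMono b.succ).lt_iff_lt.mp hh))]
    -- global split at index 0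
    have hq0 := Qsplit (fun i j => (x i - x j) / (1 - x i * x j))
      (univ : Finset (Fin (2 * (m + 1)))) 0 (Finset.mem_univ 0)
    have h0k : ∀ k ∈ (univ : Finset (Fin (2 * (m + 1)))).erase 0,
        (if (0 : Fin (2 * (m + 1))) < k then (x 0 - x k) / (1 - x 0 * x k)
          else (x k - x 0) / (1 - x k * x 0)) = (x 0 - x k) / (1 - x 0 * x k) := by
      intro k hk
      rw [if_pos (Fin.pos_of_ne_zero (Finset.mem_erase.mp hk).1)]
    rw [Finset.prod_congr rfl h0k] at hq0
    -- per-b split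
    have hsplit : ∀ b : Fin (2 * m + 1),
        (∏ a ∈ ((univ : Finset (Fin (2 * (m + 1)))).erase 0).erase b.succ,
          ∏ bb ∈ ((univ : Finset (Fin (2 * (m + 1)))).erase 0).erase b.succ,
            (if a < bb then (x a - x bb) / (1 - x a * x bb) else 1))
        = (∏ a ∈ (univ : Finset (Fin (2 * (m + 1)))).erase 0,
            ∏ bb ∈ (univ : Finset (Fin (2 * (m + 1)))).erase 0,
              (if a < bb then (x a - x bb) / (1 - x a * x bb) else 1))
          * ((-1 : ℝ) ^ (b : ℕ) * ∏ k ∈ ((univ : Finset (Fin (2 * (m + 1)))).erase 0).erase b.succ,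
              (x b.succ - x k) / (1 - x b.succ * x k))⁻¹ := by
      intro b
      have hmem : b.succ ∈ (univ : Finset (Fin (2 * (m + 1)))).erase 0 :=
        Finset.mem_erase.mpr ⟨Fin.succ_ne_zero b, Finset.mem_univ _⟩
      have hq := Qsplit (fun i j => (x i - x j) / (1 - x i * x j))
        ((univ : Finset (Fin (2 * (m + 1)))).erase 0) b.succ hmem
      have hcor : ∏ k ∈ ((univ : Finset (Fin (2 * (m + 1)))).erase 0).erase b.succ,
          (if b.succ < k then (x b.succ - x k) / (1 - x b.succ * x k)
            else (x k - x b.succ) / (1 - x k * x b.succ))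
          = (-1 : ℝ) ^ (b : ℕ)
            * ∏ k ∈ ((univ : Finset (Fin (2 * (m + 1)))).erase 0).erase b.succ,
                (x b.succ - x k) / (1 - x b.succ * x k) := by
        have hpt : ∀ k ∈ ((univ : Finset (Fin (2 * (m + 1)))).erase 0).erase b.succ,
            (if b.succ < k then (x b.succ - x k) / (1 - x b.succ * x k)
              else (x k - x b.succ) / (1 - x k * x b.succ))
            = (if k < b.succ then (-1 : ℝ) else 1)
                * ((x b.succ - x k) / (1 - x b.succ * x k)) := by
          intro k hk
          have hkj : k ≠ b.succ := (Finset.mem_erase.mp hk).1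
          rcases lt_trichotomy b.succ k with h | h | h
          · rw [if_pos h, if_neg h.asymm, one_mul]
          · exact absurd h.symm hkj
          · rw [if_neg h.asymm, if_pos h, hskew b.succ k, neg_one_mul]
        rw [Finset.prod_congr rfl hpt, Finset.prod_mul_distrib]
        congr 1
        rw [Finset.prod_ite (fun _ => (-1 : ℝ)) (fun _ => (1 : ℝ)), Finset.prod_const,
          Finset.prod_const_one, mul_one, count_lt b.succ (Fin.succ_ne_zero b), Fin.val_succ]
        simp
      rw [hcor] at hq
      have hPne : ((-1 : ℝ) ^ (b : ℕ)
          * ∏ k ∈ ((univ : Finset (Fin (2 * (m + 1)))).erase 0).erase b.succ,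
              (x b.succ - x k) / (1 - x b.succ * x k)) ≠ 0 :=
        mul_ne_zero (pow_ne_zero _ (by norm_num))
          (Finset.prod_ne_zero_iff.mpr fun k hk =>
            hc_ne _ _ (fun h => (Finset.mem_erase.mp hk).1 h.symm))
      rw [hq, mul_assoc, mul_inv_cancel₀ hPne, mul_one]
    -- assemble the sum
    have hterm : ∀ b : Fin (2 * m + 1),
        (-1 : ℝ) ^ (b : ℕ)
            * (Matrix.of fun i j => (x i - x j) / (1 - x i * x j)) 0 b.succ
            * pfaffian ((Matrix.of fun i j => (x i - x j) / (1 - x i * x j)).submatrix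
                (emb b.succ) (emb b.succ))
          = (∏ a ∈ (univ : Finset (Fin (2 * (m + 1)))).erase 0,
              ∏ bb ∈ (univ : Finset (Fin (2 * (m + 1)))).erase 0,
                (if a < bb then (x a - x bb) / (1 - x a * x bb) else 1))
            * ((x 0 - x b.succ) / (1 - x 0 * x b.succ)
                * ∏ t ∈ (univ : Finset (Fin (2 * m + 1))).erase b,
                    ((x b.succ - x t.succ) / (1 - x b.succ * x t.succ))⁻¹) := by
      intro b
      rw [hminor b, hQminor b, hsplit b, Matrix.of_apply]
      have hPne : ((-1 : ℝ) ^ (b : ℕ)) ≠ 0 := pow_ne_zero _ (by norm_num)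
      rw [mul_inv, ← Finset.prod_inv_distrib]
      rw [prod_erase_both_eq b (fun k => ((x b.succ - x k) / (1 - x b.succ * x k))⁻¹)]
      have halg : ∀ a Q c0 P : ℝ, a ≠ 0 → a * c0 * (Q * (a⁻¹ * P)) = Q * (c0 * P) := by
        intro a Q c0 P ha
        calc a * c0 * (Q * (a⁻¹ * P)) = (a * a⁻¹) * (c0 * (Q * P)) := by ring
          _ = Q * (c0 * P) := by rw [mul_inv_cancel₀ ha]; ring
      exact halg _ _ _ _ hPne
    rw [Finset.sum_congr rfl (fun b _ => hterm b), ← Finset.mul_sum]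
    have hkey := keyB (fun t : Fin (2 * m + 1) => x t.succ) (fun t => hx _)
      (fun a b h => Fin.succ_injective _ (hinj h)) (x 0) (hx 0)
    rw [hkey]
    rw [← prod_erase_zero_eq (fun k => (x 0 - x k) / (1 - x 0 * x k))]
    exact hq0.symm

end SchurPf

open SchurPf in
/-- Schur's Pfaffian identity. -/
theorem schur_pfaffian (n : ℕ) (x : Fin (2 * n) → ℝ)
    (hx : ∀ i, x i ∈ Set.Ioo (-1 : ℝ) 1) :
    pfaffian (Matrix.of fun i j => (x i - x j) / (1 - x i * x j))
      = ∏ i, ∏ j, if i < j then (x i - x j) / (1 - x i * x j) else 1 := by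
  classical
  set δ : Fin (2 * n) → ℝ := fun i => ((i : ℕ) + 1) / (2 * n + 1) with hδ
  have hδ_mem : ∀ i, δ i ∈ Set.Ioo (0:ℝ) 1 := by
    intro i
    have hi : (i : ℕ) < 2 * n := i.2
    constructor
    · apply div_pos <;> [positivity; positivity]
    · rw [div_lt_one (by positivity)]
      have : ((i : ℕ) : ℝ) < 2 * n := by exact_mod_cast hi
      linarith
  have hδ_inj : Function.Injective δ := by
    intro a b h
    have hD : (2 * (n:ℝ) + 1) ≠ 0 := by positivity
    rw [hδ] at h
    simp only at h
    rw [div_eq_div_iff hD hD] at h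
    have h2 := mul_right_cancel₀ hD h
    have h3 : (((a : ℕ) : ℝ)) = ((b : ℕ) : ℝ) := by linarith
    exact Fin.ext (by exact_mod_cast h3)
  set y : ℝ → Fin (2 * n) → ℝ := fun ε i => (1 - ε) * x i + ε * δ i with hy
  have hy0 : ∀ i, y 0 i = x i := by intro i; rw [hy]; ring
  have hyc : ∀ i, ContinuousAt (fun ε => y ε i) 0 := by
    intro i; rw [hy]; fun_prop
  have hent : ∀ i j : Fin (2 * n), Filter.Tendsto
      (fun ε => (y ε i - y ε j) / (1 - y ε i * y ε j)) (nhds 0)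
      (nhds ((x i - x j) / (1 - x i * x j))) := by
    intro i j
    have h1 : Filter.Tendsto (fun ε => y ε i - y ε j) (nhds 0) (nhds (x i - x j)) := by
      have := ((hyc i).sub (hyc j))
      simp only [ContinuousAt, Pi.sub_apply, hy0] at this; exact this
    have h2 : Filter.Tendsto (fun ε => 1 - y ε i * y ε j) (nhds 0) (nhds (1 - x i * x j)) := by
      have : ContinuousAt (fun ε => 1 - y ε i * y ε j) 0 := by
        exact (continuousAt_const.sub ((hyc i).mul (hyc j)))
      rwa [ContinuousAt, hy0, hy0] at this
    exact h1.div h2 (SchurPf.one_sub_mul_ne_zero (hx i) (hx j))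
  -- tendsto of both sides
  have hL : Filter.Tendsto
      (fun ε => pfaffian (Matrix.of fun i j => (y ε i - y ε j) / (1 - y ε i * y ε j)))
      (nhds 0) (nhds (pfaffian (Matrix.of fun i j => (x i - x j) / (1 - x i * x j)))) := by
    unfold pfaffian
    refine tendsto_finset_sum _ fun η _ => ?_
    by_cases hP : (∀ i : Fin n, η (pairIdx i 0) < η (pairIdx i 1)) ∧
        (∀ i j : Fin n, i < j → η (pairIdx i 0) < η (pairIdx j 0))
    · simp only [if_pos hP]
      refine Filter.Tendsto.const_mul _ (tendsto_finset_prod _ fun i _ => ?_)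
      simp only [Matrix.of_apply]
      exact hent _ _
    · simp only [if_neg hP]
      exact tendsto_const_nhds
  have hR : Filter.Tendsto
      (fun ε => ∏ i, ∏ j, if i < j then (y ε i - y ε j) / (1 - y ε i * y ε j) else 1)
      (nhds 0)
      (nhds (∏ i, ∏ j, if i < j then (x i - x j) / (1 - x i * x j) else 1)) := by
    refine tendsto_finset_prod _ fun i _ => tendsto_finset_prod _ fun j _ => ?_
    by_cases hij : i < j
    · simp only [if_pos hij]; exact hent _ _
    · simp only [if_neg hij]; exact tendsto_const_nhds
  -- eventual equality on the right-neighborhood of 0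
  have hmemIoo : ∀ᶠ ε in nhdsWithin (0:ℝ) (Set.Ioi 0), ∀ i, y ε i ∈ Set.Ioo (-1:ℝ) 1 := by
    refine Filter.Eventually.filter_mono nhdsWithin_le_nhds ?_
    rw [Filter.eventually_all]
    intro i
    have := (hyc i).eventually_mem (isOpen_Ioo.mem_nhds (by rw [hy0]; exact hx i))
    exact this
  have hinj : ∀ᶠ ε in nhdsWithin (0:ℝ) (Set.Ioi 0), Function.Injective (y ε) := by
    have hall : ∀ᶠ ε in nhdsWithin (0:ℝ) (Set.Ioi 0),
        ∀ i j : Fin (2 * n), i ≠ j → y ε i ≠ y ε j := by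
      rw [Filter.eventually_all]
      intro i
      rw [Filter.eventually_all]
      intro j
      by_cases hij : i = j
      · exact Filter.Eventually.of_forall fun ε h => absurd hij h
      · by_cases hxe : x i = x j
        · refine eventually_nhdsWithin_of_forall fun ε hε => fun _ heq => ?_
          have hε0 : (0:ℝ) < ε := hε
          have h2 : ε * δ i = ε * δ j := by
            rw [hy] at heq
            simp only at heq
            linear_combination heq - (1 - ε) * hxe
          have := mul_left_cancel₀ (ne_of_gt hε0) h2
          exact hij (hδ_inj this)
        · refine Filter.Eventually.filter_mono nhdsWithin_le_nhds ?_
          have hc : ContinuousAt (fun ε => y ε i - y ε j) 0 := (hyc i).sub (hyc j)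
          have hne : y 0 i - y 0 j ≠ 0 := by
            rw [hy0, hy0]; exact sub_ne_zero.mpr hxe
          have := hc.eventually_mem (isOpen_compl_singleton.mem_nhds hne)
          refine this.mono fun ε hε => fun _ => ?_
          intro heq
          exact hε (by rw [Set.mem_singleton_iff, heq, sub_self])
    refine hall.mono fun ε h => ?_
    intro i j heq
    by_contra hne
    exact h i j hne heq
  have heq : ∀ᶠ ε in nhdsWithin (0:ℝ) (Set.Ioi 0),
      pfaffian (Matrix.of fun i j => (y ε i - y ε j) / (1 - y ε i * y ε j))
        = ∏ i, ∏ j, if i < j then (y ε i - y ε j) / (1 - y ε i * y ε j) else 1 := by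
    filter_upwards [hmemIoo, hinj] with ε h1 h2
    exact SchurPf.schur_inj n (y ε) h1 h2
  exact tendsto_nhds_unique
    ((hL.mono_left nhdsWithin_le_nhds).congr' heq)
    (hR.mono_left nhdsWithin_le_nhds)
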